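/- Consider a cycle graph on N vertices with unit edge lengths, a set of targets T among its vertices with deadlines d : T → ℕ, and a starting vertex v. The set of vertices visited by any walk starting at v is an arc (a set of consecutive vertices along the cycle) containing v; hence every proper covering set from v equals T ∩ A for some arc A containing v, and the number of proper covering sets from v is at most (|T| + 1)². (This characterization underlies the polynomial-time algorithm for SRG-v on cycle graphs.) -/

import Mathlib

/-- `A` is an arc of the cycle graph on `ZMod N`: a set of consecutive vertices. -/
def IsArc (N : ℕ) (A : Finset (ZMod N)) : Prop :=
  ∃ (s : ZMod N) (l : ℕ),
    A = (Finset.range (l + 1)).image (fun k : ℕ => (s + (k : ZMod N)))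

/-- `Q` is a proper covering set from `v` on the cycle graph on `ZMod N` (unit edge
lengths), with targets `T` and deadlines `d`: there is a walk starting at `v` that
visits every target of `Q` within its deadline and passes through no target of
`T \ Q`. -/
def CyclePCS (N : ℕ) (T : Finset (ZMod N)) (d : ZMod N → ℕ) (v : ZMod N)
    (Q : Finset (ZMod N)) : Prop :=
  Q ⊆ T ∧ ∃ (m : ℕ) (x : ℕ → ZMod N),
    x 0 = v ∧
    (∀ j < m, x (j + 1) = x j + 1 ∨ x (j + 1) = x j - 1) ∧
    (∀ t ∈ Q, ∃ j, j ≤ m ∧ j ≤ d t ∧ x j = t) ∧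
    (∀ j ≤ m, x j ∈ T → x j ∈ Q)

/-- Inserting a neighbor of a member of an arc yields an arc. -/
lemma arc_insert (N : ℕ) (A : Finset (ZMod N)) (hA : IsArc N A) (y z : ZMod N)
    (hy : y ∈ A) (hz : z = y + 1 ∨ z = y - 1) : IsArc N (insert z A) := by
  by_cases hmem : z ∈ A
  · rwa [Finset.insert_eq_self.2 hmem]
  obtain ⟨s, l, rfl⟩ := hA
  obtain ⟨k, hk, hky⟩ := Finset.mem_image.1 hy
  rw [Finset.mem_range] at hk
  rcases hz with rfl | rfl
  · -- z = y + 1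
    have hkl : k = l := by
      by_contra h
      exact hmem (Finset.mem_image.2 ⟨k + 1, Finset.mem_range.2 (by omega),
        by push_cast; rw [← hky]; ring⟩)
    have hz2 : y + 1 = s + ((l + 1 : ℕ) : ZMod N) := by
      rw [← hky, hkl]; push_cast; ring
    refine ⟨s, l + 1, ?_⟩
    rw [hz2]
    conv_rhs => rw [Finset.range_add_one, Finset.image_insert]
  · -- z = y - 1
    have hk0 : k = 0 := by
      by_contra h
      refine hmem (Finset.mem_image.2 ⟨k - 1, Finset.mem_range.2 (by omega), ?_⟩)
      rw [Nat.cast_sub (by omega : 1 ≤ k), ← hky]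
      push_cast
      ring
    have hzs : y - 1 = s - 1 := by rw [← hky, hk0]; push_cast; ring
    refine ⟨s - 1, l + 1, ?_⟩
    ext w
    simp only [Finset.mem_insert, Finset.mem_image, Finset.mem_range]
    constructor
    · rintro (rfl | ⟨k', hk', rfl⟩)
      · exact ⟨0, by omega, by rw [hzs]; push_cast; ring⟩
      · exact ⟨k' + 1, by omega, by push_cast; ring⟩
    · rintro ⟨k'', hk'', rfl⟩
      rcases Nat.eq_zero_or_pos k'' with rfl | hpos
      · left; rw [hzs]; push_cast; ring
      · right
        refine ⟨k'' - 1, by omega, ?_⟩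
        rw [Nat.cast_sub (by omega : 1 ≤ k'')]
        push_cast
        ring

/-- The set of vertices visited by a walk from `v` is an arc containing `v`. -/
lemma walk_arc (N : ℕ) (v : ZMod N) (m : ℕ) (x : ℕ → ZMod N) (hx0 : x 0 = v)
    (hstep : ∀ j < m, x (j + 1) = x j + 1 ∨ x (j + 1) = x j - 1) :
    IsArc N ((Finset.range (m + 1)).image x) ∧
      v ∈ (Finset.range (m + 1)).image x := by
  induction m with
  | zero =>
      constructor
      · exact ⟨v, 0, by simp [hx0]⟩
      · simp [hx0]
  | succ m ih =>
      have ih' := ih (fun j hj => hstep j (by omega))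
      have hrw : (Finset.range (m + 1 + 1)).image x
          = insert (x (m + 1)) ((Finset.range (m + 1)).image x) := by
        rw [Finset.range_add_one, Finset.image_insert]
      rw [hrw]
      refine ⟨?_, Finset.mem_insert_of_mem ih'.2⟩
      exact arc_insert N _ ih'.1 (x m) (x (m + 1))
        (Finset.mem_image.2 ⟨m, Finset.mem_range.2 (by omega), rfl⟩)
        (hstep m (by omega))

/-- An arc containing `v` is the union of a backward ray and a forward ray from `v`. -/
lemma arc_decomp (N : ℕ) (A : Finset (ZMod N)) (v : ZMod N) (hA : IsArc N A)
    (hv : v ∈ A) :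
    ∃ a b : ℕ,
      A = (Finset.range (a + 1)).image (fun i : ℕ => v - (i : ZMod N)) ∪
          (Finset.range (b + 1)).image (fun i : ℕ => v + (i : ZMod N)) := by
  obtain ⟨s, l, rfl⟩ := hA
  obtain ⟨j, hj, hjv⟩ := Finset.mem_image.1 hv
  rw [Finset.mem_range] at hj
  refine ⟨j, l - j, ?_⟩
  ext w
  simp only [Finset.mem_union, Finset.mem_image, Finset.mem_range]
  constructor
  · rintro ⟨k, hk, rfl⟩
    by_cases hkj : k ≤ j
    · exact Or.inl ⟨j - k, by omega,
        by rw [← hjv, Nat.cast_sub hkj]; ring⟩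
    · exact Or.inr ⟨k - j, by omega,
        by rw [← hjv, Nat.cast_sub (by omega : j ≤ k)]; ring⟩
  · rintro (⟨i, hi, rfl⟩ | ⟨i, hi, rfl⟩)
    · exact ⟨j - i, by omega, by rw [← hjv, Nat.cast_sub (by omega : i ≤ j)]; ring⟩
    · exact ⟨j + i, by omega, by rw [← hjv]; push_cast; ring⟩

/-- A monotone chain of subsets of `T` takes at most `|T| + 1` values. -/
lemma chain_card {α : Type*} [DecidableEq α] (T : Finset α) (u : ℕ → Finset α)
    (hm : Monotone u) (hs : ∀ a, u a ⊆ T) :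
    ∃ U : Finset (Finset α), (∀ a, u a ∈ U) ∧ U.card ≤ T.card + 1 := by
  have hinj : Set.InjOn Finset.card (Set.range u) := by
    rintro _ ⟨a, rfl⟩ _ ⟨b, rfl⟩ hab
    rcases le_total a b with h | h
    · exact Finset.eq_of_subset_of_card_le (hm h) hab.ge
    · exact (Finset.eq_of_subset_of_card_le (hm h) hab.le).symm
  have hfin : (Set.range u).Finite := by
    refine Set.Finite.of_finite_image ?_ hinj
    exact (Set.finite_Iic T.card).subset (by
      rintro _ ⟨X, ⟨a, rfl⟩, rfl⟩
      exact Finset.card_le_card (hs a))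
  refine ⟨hfin.toFinset, fun a => hfin.mem_toFinset.2 ⟨a, rfl⟩, ?_⟩
  have := Finset.card_le_card_of_injOn Finset.card
    (s := hfin.toFinset) (t := Finset.range (T.card + 1))
    (fun X hX => by
      rw [Finset.mem_coe, hfin.mem_toFinset] at hX
      obtain ⟨a, rfl⟩ := hX
      exact Finset.mem_coe.2 <| Finset.mem_range.2 (by have := Finset.card_le_card (hs a); omega))
    (by rw [Set.Finite.coe_toFinset]; exact hinj)
  simpa using this

/-- On a cycle graph: the set of vertices visited by any walk starting at `v` is an arc
containing `v`; hence every proper covering set from `v` equals `T ∩ A` for some arc `A`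
containing `v`, and there are at most `(|T| + 1)²` proper covering sets from `v`. -/
theorem stmt11 (N : ℕ) (hN : 3 ≤ N) (T : Finset (ZMod N)) (d : ZMod N → ℕ)
    (v : ZMod N) :
    (∀ (m : ℕ) (x : ℕ → ZMod N), x 0 = v →
        (∀ j < m, x (j + 1) = x j + 1 ∨ x (j + 1) = x j - 1) →
        IsArc N ((Finset.range (m + 1)).image x) ∧
          v ∈ (Finset.range (m + 1)).image x) ∧
    (∀ Q : Finset (ZMod N), CyclePCS N T d v Q →
        ∃ A : Finset (ZMod N), IsArc N A ∧ v ∈ A ∧ Q = T ∩ A) ∧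
    {Q : Finset (ZMod N) | CyclePCS N T d v Q}.encard ≤ (((T.card + 1) ^ 2 : ℕ) : ℕ∞) := by
  have h2 : ∀ Q : Finset (ZMod N), CyclePCS N T d v Q →
      ∃ A : Finset (ZMod N), IsArc N A ∧ v ∈ A ∧ Q = T ∩ A := by
    intro Q hQ
    obtain ⟨hQT, m, x, hx0, hstep, hvisit, hpass⟩ := hQ
    obtain ⟨harc, hvmem⟩ := walk_arc N v m x hx0 hstep
    refine ⟨(Finset.range (m + 1)).image x, harc, hvmem, ?_⟩
    ext t
    simp only [Finset.mem_inter]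
    constructor
    · intro ht
      obtain ⟨j, hjm, _, hxj⟩ := hvisit t ht
      exact ⟨hQT ht, Finset.mem_image.2 ⟨j, Finset.mem_range.2 (by omega), hxj⟩⟩
    · rintro ⟨hT, hA⟩
      obtain ⟨j, hj, rfl⟩ := Finset.mem_image.1 hA
      rw [Finset.mem_range] at hj
      exact hpass j (by omega) hT
  refine ⟨fun m x hx0 hstep => walk_arc N v m x hx0 hstep, h2, ?_⟩
  set u : ℕ → Finset (ZMod N) :=
    fun a => T ∩ (Finset.range (a + 1)).image (fun i : ℕ => v - (i : ZMod N)) with hu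
  set w : ℕ → Finset (ZMod N) :=
    fun b => T ∩ (Finset.range (b + 1)).image (fun i : ℕ => v + (i : ZMod N)) with hw
  have hmu : Monotone u := monotone_nat_of_le_succ fun a =>
    Finset.inter_subset_inter (Finset.Subset.refl T)
      (Finset.image_subset_image (Finset.range_subset_range.2 (by omega)))
  have hmw : Monotone w := monotone_nat_of_le_succ fun b =>
    Finset.inter_subset_inter (Finset.Subset.refl T)
      (Finset.image_subset_image (Finset.range_subset_range.2 (by omega)))
  obtain ⟨U, hU, hUc⟩ := chain_card T u hmu (fun a => Finset.inter_subset_left)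
  obtain ⟨W, hW, hWc⟩ := chain_card T w hmw (fun b => Finset.inter_subset_left)
  have hsub : {Q : Finset (ZMod N) | CyclePCS N T d v Q} ⊆
      ↑(Finset.image₂ (· ∪ ·) U W) := by
    intro Q hQ
    obtain ⟨A, hA, hvA, rfl⟩ := h2 Q hQ
    obtain ⟨a, b, rfl⟩ := arc_decomp N A v hA hvA
    rw [Finset.inter_union_distrib_left]
    exact Finset.mem_coe.2 (Finset.mem_image₂.2 ⟨u a, hU a, w b, hW b, rfl⟩)
  calc {Q : Finset (ZMod N) | CyclePCS N T d v Q}.encard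
      ≤ (↑(Finset.image₂ (· ∪ ·) U W) : Set (Finset (ZMod N))).encard :=
        Set.encard_mono hsub
    _ = ((Finset.image₂ (· ∪ ·) U W).card : ℕ∞) :=
        Set.encard_coe_eq_coe_finsetCard _
    _ ≤ (((T.card + 1) ^ 2 : ℕ) : ℕ∞) := by
        rw [Nat.cast_le]
        calc (Finset.image₂ (· ∪ ·) U W).card ≤ U.card * W.card :=
              Finset.card_image₂_le _ _ _
          _ ≤ (T.card + 1) * (T.card + 1) := Nat.mul_le_mul hUc hWc
          _ = (T.card + 1) ^ 2 := by ring
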